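/- arXiv:1708.07052 — 3 statements merged into one kernel-verified Lean document; each statement's English description precedes it below -/
import Mathlib

section
/- Let f : [0,T] → ℝ be nondecreasing, and suppose sup_n Σ_{i=1}^{2^n} (T/2^n)·Ψ((f(iT/2^n) − f((i−1)T/2^n))/(T/2^n)) < ∞, where Ψ is the truncated Poisson rate function. Then f is absolutely continuous on [0,T]. -/
/-- The truncated Poisson rate function `Ψ(λ) = λ log(max λ 1) − (max λ 1 − 1)`. -/
noncomputable def trPoisson (l : ℝ) : ℝ := l * Real.log (max l 1) - (max l 1 - 1)

/-- Absolute continuity of a function on the interval `[a,b]`. -/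
def AbsolutelyContinuousOnIcc (f : ℝ → ℝ) (a b : ℝ) : Prop :=
  ∀ ε > (0:ℝ), ∃ δ > (0:ℝ), ∀ (n : ℕ) (s t : Fin n → ℝ),
    (∀ i, a ≤ s i ∧ s i ≤ t i ∧ t i ≤ b) →
    (Pairwise fun i j => Disjoint (Set.Ioo (s i) (t i)) (Set.Ioo (s j) (t j))) →
    (∑ i, (t i - s i)) ≤ δ → (∑ i, |f (t i) - f (s i)|) ≤ ε

lemma trPoisson_nonneg (l : ℝ) : 0 ≤ trPoisson l := by
  unfold trPoisson
  rcases le_total l 1 with hl | hl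
  · rw [max_eq_right hl]; simp
  · rw [max_eq_left hl]
    have hlpos : 0 < l := lt_of_lt_of_le one_pos hl
    have h1 : Real.log (1/l) ≤ 1/l - 1 := Real.log_le_sub_one_of_pos (by positivity)
    rw [Real.log_div one_ne_zero (ne_of_gt hlpos), Real.log_one] at h1
    have : l * (0 - Real.log l) ≤ l * (1/l - 1) := by
      apply mul_le_mul_of_nonneg_left _ hlpos.le
      simpa using h1
    rw [mul_sub] at this
    have hl' : l * (1/l) = 1 := by field_simp
    nlinarith
lemma trPoisson_ge {l c : ℝ} (hc : 1 ≤ c) (hl : c ≤ l) :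
    l * (Real.log c - 1) ≤ trPoisson l := by
  unfold trPoisson
  have h1l : 1 ≤ l := hc.trans hl
  rw [max_eq_left h1l]
  have hlog : Real.log c ≤ Real.log l :=
    Real.log_le_log (lt_of_lt_of_le one_pos hc) hl
  have : l * Real.log c ≤ l * Real.log l :=
    mul_le_mul_of_nonneg_left hlog (by linarith)
  nlinarith

lemma sum_incr_le {ι : Type*} [DecidableEq ι] (f : ℝ → ℝ) (a : ℝ) (u v : ι → ℝ)
    (S : Finset ι) :
    ∀ (b : ℝ), a ≤ b → MonotoneOn f (Set.Icc a b) →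
    (∀ i ∈ S, a ≤ u i ∧ u i < v i ∧ v i ≤ b) →
    ((S : Set ι).Pairwise fun i j => Disjoint (Set.Ioo (u i) (v i)) (Set.Ioo (u j) (v j))) →
    ∑ i ∈ S, (f (v i) - f (u i)) ≤ f b - f a := by
  classical
  induction S using Finset.strongInduction with
  | _ S ih =>
    intro b hab hf hb hdisj
    rcases S.eq_empty_or_nonempty with rfl | hne
    · have := hf (Set.mem_Icc.mpr ⟨le_refl a, hab⟩) (Set.mem_Icc.mpr ⟨hab, le_refl b⟩) hab
      simpa using this
    · obtain ⟨i0, hi0S, hi0max⟩ := S.exists_max_image v hne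
      obtain ⟨ha0, hu0, hv0⟩ := hb i0 hi0S
      have key : ∀ j ∈ S.erase i0, v j ≤ u i0 := by
        intro j hj
        obtain ⟨hjne, hjS⟩ := Finset.mem_erase.mp hj
        by_contra hlt
        push_neg at hlt
        obtain ⟨haj, huj, hvj⟩ := hb j hjS
        have hd := hdisj hjS hi0S hjne
        have hvv : v j ≤ v i0 := hi0max j hjS
        have hnd : ((Set.Ioo (u j) (v j)) ∩ (Set.Ioo (u i0) (v i0))).Nonempty := by
          rw [Set.Ioo_inter_Ioo, Set.nonempty_Ioo]
          rw [min_eq_left hvv]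
          exact max_lt huj hlt
        exact (Set.not_disjoint_iff_nonempty_inter.mpr hnd) hd
      have hsplit : S = insert i0 (S.erase i0) := (Finset.insert_erase hi0S).symm
      rw [hsplit, Finset.sum_insert (Finset.notMem_erase _ _)]
      have hIH := ih (S.erase i0) (Finset.erase_ssubset hi0S) (u i0) ha0
        (hf.mono (Set.Icc_subset_Icc_right (hu0.le.trans hv0)))
        (fun j hj => ⟨(hb j (Finset.mem_of_mem_erase hj)).1,
          (hb j (Finset.mem_of_mem_erase hj)).2.1, key j hj⟩)
        (hdisj.mono (Finset.coe_subset.mpr (Finset.erase_subset _ _)))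
      have hfv : f (v i0) ≤ f b :=
        hf (Set.mem_Icc.mpr ⟨ha0.trans hu0.le, hv0⟩) (Set.mem_Icc.mpr ⟨hab, le_refl b⟩) hv0
      linarith


set_option maxHeartbeats 1600000 in
/-- If `f` is nondecreasing on `[0,T]` and the dyadic discretized `Ψ`-functionals
are uniformly bounded over all dyadic levels, then `f` is absolutely continuous. -/
theorem stmt5 (T : ℝ) (hT : 0 < T) (f : ℝ → ℝ)
    (hmono : MonotoneOn f (Set.Icc 0 T))
    (hsum : ∃ M : ℝ, ∀ n : ℕ, ∑ i ∈ Finset.range (2 ^ n),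
      (T / 2 ^ n) *
        trPoisson ((f (((i:ℝ) + 1) * T / 2 ^ n) - f ((i:ℝ) * T / 2 ^ n)) / (T / 2 ^ n)) ≤ M) :
    AbsolutelyContinuousOnIcc f 0 T := by
  classical
  obtain ⟨M, hM⟩ := hsum
  intro ε hε
  set M' : ℝ := max M 0 + 1 with hM'def
  have hM'pos : 0 < M' := by positivity
  have hMM' : M ≤ M' := le_trans (le_max_left _ _) (by linarith)
  set K : ℝ := Real.exp (1 + 3 * M' / ε) with hKdef
  have hKpos : 0 < K := Real.exp_pos _
  have hlogK : Real.log K = 1 + 3 * M' / ε := Real.log_exp _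
  have h3M : 0 < 3 * M' / ε := by positivity
  have hK1 : 1 < K := by
    rw [hKdef, show (1:ℝ) = Real.exp 0 from (Real.exp_zero).symm]
    exact Real.exp_lt_exp.mpr (by rw [Real.exp_zero]; positivity)
  refine ⟨ε / (3 * K), by positivity, ?_⟩
  intro m s t hst hdisj hlen
  -- choose a fine dyadic level N
  obtain ⟨N, hN⟩ := pow_unbounded_of_one_lt (R := ℝ) (6 * K * T * ((m:ℝ) + 1) / ε) one_lt_two
  set h : ℝ := T / 2 ^ N with hhdef
  have h2N : (0:ℝ) < 2 ^ N := by positivity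
  have hhpos : 0 < h := by positivity
  have hhsmall : h * (6 * K * ((m:ℝ) + 1)) ≤ ε := by
    rw [div_lt_iff₀ hε] at hN
    rw [hhdef, div_mul_eq_mul_div, div_le_iff₀ h2N]
    nlinarith
  set P : ℕ := 2 ^ N with hPdef
  have hPh : (P:ℝ) * h = T := by
    rw [hPdef, hhdef]; push_cast; field_simp
  set a : ℕ → ℝ := fun k => (k:ℝ) * h with hadef
  have ha_mono : ∀ k : ℕ, a k ≤ a (k + 1) := by
    intro k
    simp only [hadef]
    have : (k:ℝ) ≤ (k:ℝ) + 1 := by linarith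
    push_cast
    nlinarith
  have ha_nonneg : ∀ k : ℕ, 0 ≤ a k := by
    intro k; simp only [hadef]; positivity
  have ha_le : ∀ k : ℕ, k ≤ P → a k ≤ T := by
    intro k hk
    rw [← hPh]
    simp only [hadef]
    have : (k:ℝ) ≤ (P:ℝ) := by exact_mod_cast hk
    nlinarith
  -- clamp
  set cl : ℕ → ℝ → ℝ := fun k x => max (min x (a (k + 1))) (a k) with hcldef
  have hcl_mem : ∀ k x, a k ≤ cl k x ∧ cl k x ≤ a (k + 1) := by
    intro k x
    exact ⟨le_max_right _ _, max_le (min_le_right _ _) (ha_mono k)⟩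
  have hcl_mono : ∀ k {x y}, x ≤ y → cl k x ≤ cl k y := by
    intro k x y hxy
    exact max_le_max (min_le_min hxy (le_refl _)) (le_refl _)
  have hid : ∀ (k : ℕ) (x : ℝ),
      f (min x (a (k+1))) - f (min x (a k)) = f (cl k x) - f (a k) := by
    intro k x
    have hab := ha_mono k
    rcases le_total x (a k) with hx | hx
    · rw [min_eq_left (hx.trans hab), min_eq_left hx,
        show cl k x = a k from max_eq_right (by rw [min_eq_left (hx.trans hab)]; exact hx)]
      ring
    · rcases le_total x (a (k+1)) with hx2 | hx2
      · rw [min_eq_left hx2, min_eq_right hx,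
          show cl k x = x from by rw [hcldef]; simp [min_eq_left hx2, max_eq_left hx]]
      · rw [min_eq_right hx2, min_eq_right hx,
          show cl k x = a (k+1) from by rw [hcldef]; simp [min_eq_right hx2, max_eq_left hab]]
  -- pieces
  set q : Fin m → ℕ → ℝ := fun i k =>
    (f (min (t i) (a (k+1))) - f (min (t i) (a k))) -
    (f (min (s i) (a (k+1))) - f (min (s i) (a k))) with hqdef
  have hq_eq : ∀ i k, q i k = f (cl k (t i)) - f (cl k (s i)) := by
    intro i k
    rw [hqdef]; simp only
    rw [hid k (t i), hid k (s i)]; ring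
  have htel : ∀ i : Fin m, ∑ k ∈ Finset.range P, q i k = f (t i) - f (s i) := by
    intro i
    obtain ⟨hs0, hstle, htT⟩ := hst i
    have key : ∀ x : ℝ, 0 ≤ x → x ≤ T →
        ∑ k ∈ Finset.range P, (f (min x (a (k+1))) - f (min x (a k))) = f x - f 0 := by
      intro x hx0 hxT
      rw [Finset.sum_range_sub (fun k => f (min x (a k)))]
      have h0 : a 0 = 0 := by simp [hadef]
      have hP : a P = T := by simp only [hadef]; exact hPh
      rw [h0, hP, min_eq_left hxT, min_eq_right hx0]
    calc ∑ k ∈ Finset.range P, q i k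
        = ∑ k ∈ Finset.range P, (f (min (t i) (a (k+1))) - f (min (t i) (a k)))
          - ∑ k ∈ Finset.range P, (f (min (s i) (a (k+1))) - f (min (s i) (a k))) := by
          rw [← Finset.sum_sub_distrib]
      _ = (f (t i) - f 0) - (f (s i) - f 0) := by
          rw [key (t i) (hs0.trans hstle) htT, key (s i) hs0 (hstle.trans htT)]
      _ = f (t i) - f (s i) := by ring
  -- subset property of clamped intervals
  have hsub : ∀ (k : ℕ) (i : Fin m), cl k (s i) < cl k (t i) →
      Set.Ioo (cl k (s i)) (cl k (t i)) ⊆ Set.Ioo (s i) (t i) := by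
    intro k i hlt y hy
    obtain ⟨hy1, hy2⟩ := hy
    have hcls := hcl_mem k (s i)
    have hclt := hcl_mem k (t i)
    constructor
    · rcases le_total (s i) (a (k+1)) with hsb | hsb
      · have : s i ≤ cl k (s i) := le_max_of_le_left (le_min (le_refl _) hsb)
        linarith
      · exfalso
        have : cl k (s i) = a (k+1) := by
          rw [hcldef]; simp [min_eq_right hsb, max_eq_left (ha_mono k)]
        linarith [hclt.2]
    · have hak : a k < cl k (t i) := lt_of_le_of_lt hcls.1 hlt
      have h1 : a k < min (t i) (a (k+1)) := by
        by_contra hcon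
        push_neg at hcon
        have : cl k (t i) = a k := max_eq_right hcon
        linarith
      have : cl k (t i) = min (t i) (a (k+1)) := max_eq_left h1.le
      have : cl k (t i) ≤ t i := this ▸ min_le_left _ _
      linarith
  -- per-cell bound
  have hq_nonneg : ∀ (i : Fin m) (k : ℕ), k < P → 0 ≤ q i k := by
    intro i k hk
    rw [hq_eq]
    obtain ⟨hs0, hstle, htT⟩ := hst i
    have h1 := hcl_mem k (s i)
    have h2 := hcl_mem k (t i)
    have haT := ha_le (k+1) hk
    have hmem1 : cl k (s i) ∈ Set.Icc (0:ℝ) T :=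
      ⟨(ha_nonneg k).trans h1.1, h1.2.trans haT⟩
    have hmem2 : cl k (t i) ∈ Set.Icc (0:ℝ) T :=
      ⟨(ha_nonneg k).trans h2.1, h2.2.trans haT⟩
    have := hmono hmem1 hmem2 (hcl_mono k hstle)
    linarith
  have hcell : ∀ k : ℕ, k < P → ∑ i : Fin m, q i k ≤ f (a (k+1)) - f (a k) := by
    intro k hk
    have haT := ha_le (k+1) hk
    have hmonok : MonotoneOn f (Set.Icc (a k) (a (k+1))) :=
      hmono.mono (Set.Icc_subset_Icc (ha_nonneg k) haT)
    set S : Finset (Fin m) := Finset.univ.filter (fun i => cl k (s i) < cl k (t i)) with hSdef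
    have hzero : ∀ i ∈ Finset.univ.filter (fun i => ¬ cl k (s i) < cl k (t i)), q i k = 0 := by
      intro i hi
      rw [Finset.mem_filter] at hi
      push_neg at hi
      have hle := hcl_mono k (hst i).2.1
      have : cl k (s i) = cl k (t i) := le_antisymm hle hi.2
      rw [hq_eq, this]; ring
    have hsplit : ∑ i : Fin m, q i k = ∑ i ∈ S, (f (cl k (t i)) - f (cl k (s i))) := by
      rw [← Finset.sum_filter_add_sum_filter_not Finset.univ (fun i => cl k (s i) < cl k (t i)) (fun i => q i k)]
      rw [Finset.sum_eq_zero hzero, add_zero]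
      exact Finset.sum_congr rfl (fun i _ => hq_eq i k)
    rw [hsplit]
    apply sum_incr_le f (a k) (fun i => cl k (s i)) (fun i => cl k (t i)) S (a (k+1))
      (ha_mono k) hmonok
    · intro i hi
      rw [hSdef, Finset.mem_filter] at hi
      exact ⟨(hcl_mem k (s i)).1, hi.2, (hcl_mem k (t i)).2⟩
    · intro i hi j hj hij
      rw [hSdef, Finset.mem_coe, Finset.mem_filter] at hi hj
      exact Disjoint.mono (hsub k i hi.2) (hsub k j hj.2) (hdisj hij)
  -- untouched cells contribute zero
  set touched : ℕ → Prop := fun k =>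
    ∃ i : Fin m, ((Set.Ioo (s i) (t i)) ∩ (Set.Ioo (a k) (a (k+1)))).Nonempty with htcdef
  have huntouched : ∀ k : ℕ, ¬ touched k → ∑ i : Fin m, q i k = 0 := by
    intro k hk
    apply Finset.sum_eq_zero
    intro i _
    rw [hq_eq]
    rcases lt_or_ge (cl k (s i)) (cl k (t i)) with hlt | hle
    · exfalso
      apply hk
      refine ⟨i, ?_⟩
      obtain ⟨y, hy⟩ := Set.nonempty_Ioo.mpr hlt
      refine ⟨y, hsub k i hlt hy, ?_⟩
      have h1 := hcl_mem k (s i)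
      have h2 := hcl_mem k (t i)
      exact ⟨lt_of_le_of_lt h1.1 hy.1, lt_of_lt_of_le hy.2 h2.2⟩
    · have hle2 := hcl_mono k (hst i).2.1
      rw [le_antisymm hle2 hle]; ring
  -- rewrite the hypothesis sum at level N
  have hc : Real.log K - 1 = 3 * M' / ε := by rw [hlogK]; ring
  have hMN : ∑ k ∈ Finset.range P, h * trPoisson ((f (a (k+1)) - f (a k)) / h) ≤ M := by
    refine le_trans (le_of_eq ?_) (hM N)
    rw [hPdef]
    apply Finset.sum_congr rfl
    intro k _
    rw [hhdef, hadef]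
    push_cast
    simp only [hhdef]
    ring_nf
  set big : ℕ → Prop := fun k => K * h < f (a (k+1)) - f (a k) with hbigdef
  -- big cells
  have hbigsum : ∑ k ∈ (Finset.range P).filter big, (∑ i : Fin m, q i k) ≤ ε / 3 := by
    have step1 : ∀ k ∈ (Finset.range P).filter big,
        (∑ i : Fin m, q i k) ≤ h * trPoisson ((f (a (k+1)) - f (a k)) / h) / (3 * M' / ε) := by
      intro k hk
      rw [Finset.mem_filter, Finset.mem_range] at hk
      have h1 := hcell k hk.1
      have hKh : K * h < f (a (k+1)) - f (a k) := hk.2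
      have hlam : K ≤ (f (a (k+1)) - f (a k)) / h := by
        rw [le_div_iff₀ hhpos]; linarith
      have h2 := trPoisson_ge hK1.le hlam
      rw [hc] at h2
      rw [le_div_iff₀ h3M]
      have h3 := mul_le_mul_of_nonneg_left h2 hhpos.le
      calc (∑ i : Fin m, q i k) * (3 * M' / ε)
          ≤ (f (a (k+1)) - f (a k)) * (3 * M' / ε) := by
            apply mul_le_mul_of_nonneg_right h1 h3M.le
        _ = h * ((f (a (k+1)) - f (a k)) / h * (3 * M' / ε)) := by
            field_simp
        _ ≤ h * trPoisson ((f (a (k+1)) - f (a k)) / h) := h3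
    calc ∑ k ∈ (Finset.range P).filter big, (∑ i : Fin m, q i k)
        ≤ ∑ k ∈ (Finset.range P).filter big,
            h * trPoisson ((f (a (k+1)) - f (a k)) / h) / (3 * M' / ε) :=
          Finset.sum_le_sum step1
      _ = (∑ k ∈ (Finset.range P).filter big,
            h * trPoisson ((f (a (k+1)) - f (a k)) / h)) / (3 * M' / ε) := by
          rw [Finset.sum_div]
      _ ≤ (∑ k ∈ Finset.range P,
            h * trPoisson ((f (a (k+1)) - f (a k)) / h)) / (3 * M' / ε) := by
          apply div_le_div_of_nonneg_right ?_ h3M.le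
          exact Finset.sum_le_sum_of_subset_of_nonneg (Finset.filter_subset _ _)
            (fun k _ _ => mul_nonneg hhpos.le (trPoisson_nonneg _))
      _ ≤ M / (3 * M' / ε) := by gcongr
      _ ≤ M' / (3 * M' / ε) := by gcongr
      _ = ε / 3 := by field_simp
  -- small cells
  have hsmallsum : ∑ k ∈ (Finset.range P).filter (fun k => ¬ big k), (∑ i : Fin m, q i k)
      ≤ 2 * ε / 3 := by
    rw [← Finset.sum_filter_add_sum_filter_not ((Finset.range P).filter (fun k => ¬ big k))
      touched (fun k => ∑ i : Fin m, q i k)]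
    have hz : ∑ k ∈ ((Finset.range P).filter (fun k => ¬ big k)).filter (fun k => ¬ touched k),
        (∑ i : Fin m, q i k) = 0 :=
      Finset.sum_eq_zero (fun k hk => huntouched k (Finset.mem_filter.mp hk).2)
    rw [hz, add_zero]
    set F := ((Finset.range P).filter (fun k => ¬ big k)).filter touched with hFdef
    set TAll := (Finset.range P).filter touched with hTAdef
    have hFT : F ⊆ TAll := by
      intro k hk
      rw [hFdef, Finset.mem_filter, Finset.mem_filter] at hk
      rw [hTAdef, Finset.mem_filter]
      exact ⟨hk.1.1, hk.2⟩
    have hstep : ∑ k ∈ F, (∑ i : Fin m, q i k) ≤ (F.card : ℝ) * (K * h) := by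
      calc ∑ k ∈ F, (∑ i : Fin m, q i k) ≤ ∑ k ∈ F, K * h := by
            apply Finset.sum_le_sum
            intro k hk
            rw [hFdef, Finset.mem_filter, Finset.mem_filter, Finset.mem_range] at hk
            have h1 := hcell k hk.1.1
            have h2 : ¬ (K * h < f (a (k+1)) - f (a k)) := hk.1.2
            push_neg at h2
            linarith
        _ = (F.card : ℝ) * (K * h) := by rw [Finset.sum_const, nsmul_eq_mul]
    -- counting
    set Ti : Fin m → Finset ℕ := fun i => (Finset.range P).filter
      (fun k => ((Set.Ioo (s i) (t i)) ∩ (Set.Ioo (a k) (a (k+1)))).Nonempty) with hTidef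
    have hTsub : TAll ⊆ Finset.univ.biUnion Ti := by
      intro k hk
      rw [hTAdef, Finset.mem_filter] at hk
      obtain ⟨i, hi⟩ := hk.2
      rw [Finset.mem_biUnion]
      exact ⟨i, Finset.mem_univ i, by rw [hTidef, Finset.mem_filter]; exact ⟨hk.1, hi⟩⟩
    have hTi_card : ∀ i : Fin m, ((Ti i).card : ℝ) ≤ (t i - s i) / h + 2 := by
      intro i
      obtain ⟨hs0, hstle, htT⟩ := hst i
      have hsub2 : Ti i ⊆ Finset.Ico (⌊s i / h⌋₊) (⌈t i / h⌉₊) := by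
        intro k hk
        rw [hTidef, Finset.mem_filter] at hk
        obtain ⟨y, hy1, hy2⟩ := hk.2
        rw [Finset.mem_Ico]
        have hup : y < ((k:ℝ) + 1) * h := by
          have h5 : y < a (k+1) := hy2.2
          simp only [hadef] at h5
          push_cast at h5
          linarith
        have hlo : (k:ℝ) * h < y := by
          have h5 : a k < y := hy2.1
          simp only [hadef] at h5
          linarith
        constructor
        · have hy2' : s i < ((k:ℝ) + 1) * h := hy1.1.trans hup
          have hfl : (⌊s i / h⌋₊ : ℝ) ≤ s i / h := Nat.floor_le (div_nonneg hs0 hhpos.le)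
          have hdiv : s i / h < (k:ℝ) + 1 := (div_lt_iff₀ hhpos).mpr hy2'
          have hcast : (⌊s i / h⌋₊ : ℝ) < ((k + 1 : ℕ) : ℝ) := by push_cast; linarith
          exact Nat.lt_succ_iff.mp (by exact_mod_cast hcast)
        · apply Nat.lt_ceil.mpr
          have hkt : (k:ℝ) * h < t i := hlo.trans hy1.2
          exact (lt_div_iff₀ hhpos).mpr hkt
      have hcard := Finset.card_le_card hsub2
      rw [Nat.card_Ico] at hcard
      rcases le_or_gt (⌊s i / h⌋₊) (⌈t i / h⌉₊) with hle | hlt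
      · have : ((Ti i).card : ℝ) ≤ (⌈t i / h⌉₊ : ℝ) - (⌊s i / h⌋₊ : ℝ) := by
          have := Nat.cast_le (α := ℝ).mpr hcard
          rwa [Nat.cast_sub hle] at this
        have hceil : (⌈t i / h⌉₊ : ℝ) < t i / h + 1 :=
          Nat.ceil_lt_add_one (div_nonneg (hs0.trans hstle) hhpos.le)
        have hfloor : s i / h - 1 < (⌊s i / h⌋₊ : ℝ) := by
          have := Nat.lt_floor_add_one (s i / h)
          linarith
        have hsd : (t i - s i) / h = t i / h - s i / h := by ring
        linarith
      · have : (Ti i).card = 0 := by omega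
        rw [this]
        have : 0 ≤ (t i - s i) / h := by
          apply div_nonneg (by linarith) hhpos.le
        norm_num
        linarith
    have hTAcard : ((TAll.card : ℝ)) ≤ ∑ i : Fin m, ((t i - s i) / h + 2) := by
      calc ((TAll.card : ℝ)) ≤ ((Finset.univ.biUnion Ti).card : ℝ) := by
            exact_mod_cast Finset.card_le_card hTsub
        _ ≤ ((∑ i : Fin m, (Ti i).card : ℕ) : ℝ) := by
            exact_mod_cast Finset.card_biUnion_le
        _ = ∑ i : Fin m, ((Ti i).card : ℝ) := by push_cast; ring
        _ ≤ ∑ i : Fin m, ((t i - s i) / h + 2) := Finset.sum_le_sum (fun i _ => hTi_card i)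
    have hsum2 : ∑ i : Fin m, ((t i - s i) / h + 2) = (∑ i : Fin m, (t i - s i)) / h + 2 * m := by
      rw [Finset.sum_add_distrib, ← Finset.sum_div, Finset.sum_const, Finset.card_univ,
        Fintype.card_fin, nsmul_eq_mul]
      ring
    have hKh_pos : 0 < K * h := mul_pos hKpos hhpos
    have hFcard : ((F.card : ℝ)) ≤ (∑ i : Fin m, (t i - s i)) / h + 2 * m := by
      have h1 : ((F.card : ℝ)) ≤ ((TAll.card : ℝ)) := by exact_mod_cast Finset.card_le_card hFT
      linarith [hTAcard, hsum2 ▸ hTAcard]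
    calc ∑ k ∈ F, (∑ i : Fin m, q i k) ≤ (F.card : ℝ) * (K * h) := hstep
      _ ≤ ((∑ i : Fin m, (t i - s i)) / h + 2 * m) * (K * h) := by
          apply mul_le_mul_of_nonneg_right hFcard hKh_pos.le
      _ = K * (∑ i : Fin m, (t i - s i)) + 2 * m * K * h := by field_simp
      _ ≤ K * (ε / (3 * K)) + 2 * m * K * h := by
          gcongr
      _ ≤ ε / 3 + ε / 3 := by
          have e1 : K * (ε / (3 * K)) = ε / 3 := by field_simp
          have e2 : 2 * (m:ℝ) * K * h ≤ ε / 3 := by nlinarith [mul_pos hKpos hhpos]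
          linarith
      _ = 2 * ε / 3 := by ring
  -- assemble
  have habs : ∑ i : Fin m, |f (t i) - f (s i)| = ∑ i : Fin m, (f (t i) - f (s i)) := by
    apply Finset.sum_congr rfl
    intro i _
    obtain ⟨hs0, hstle, htT⟩ := hst i
    apply abs_of_nonneg
    have := hmono (Set.mem_Icc.mpr ⟨hs0, hstle.trans htT⟩)
      (Set.mem_Icc.mpr ⟨hs0.trans hstle, htT⟩) hstle
    linarith
  rw [habs]
  calc ∑ i : Fin m, (f (t i) - f (s i)) = ∑ i : Fin m, ∑ k ∈ Finset.range P, q i k := by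
        exact Finset.sum_congr rfl (fun i _ => (htel i).symm)
    _ = ∑ k ∈ Finset.range P, ∑ i : Fin m, q i k := Finset.sum_comm
    _ = (∑ k ∈ (Finset.range P).filter big, ∑ i : Fin m, q i k)
        + ∑ k ∈ (Finset.range P).filter (fun k => ¬ big k), ∑ i : Fin m, q i k :=
        (Finset.sum_filter_add_sum_filter_not _ _ _).symm
    _ ≤ ε / 3 + 2 * ε / 3 := add_le_add hbigsum hsmallsum
    _ = ε := by ring
end

section
/- Fix ρ⁻, ρ⁺ ∈ (0,1) with ρ⁻ + ρ⁺ = 1 and ρ⁻ ≥ ρ⁺, and let f(ξ) := ρ⁻·ξ for ξ < 0 and ρ⁺·ξ for ξ ≥ 0. Then for every t₀ > 0, the Hopf–Lax value inf over piecewise C¹ paths w with w(t₀) = 0 of ∫₀^{t₀} φ(w'(s)) ds + f(w(0)) equals ρ⁻(1−ρ⁻)·t₀. -/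
/-- The Hopf–Lax kernel `φ`. -/
noncomputable def hlKernel (ξ : ℝ) : ℝ :=
  if ξ ≤ -1 then 0 else if ξ < 1 then (ξ + 1) ^ 2 / 4 else ξ

/-- A path is piecewise `C¹` on `[a,b]`: it is continuous, and `C¹` on each piece of
some finite partition of `[a,b]`. -/
def PiecewiseC1On (w : ℝ → ℝ) (a b : ℝ) : Prop :=
  ContinuousOn w (Set.Icc a b) ∧
  ∃ (k : ℕ) (s : Fin (k + 1) → ℝ), StrictMono s ∧ s 0 = a ∧ s (Fin.last k) = b ∧
    ∀ i : Fin k, ContDiffOn ℝ 1 w (Set.Icc (s i.castSucc) (s i.succ))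

open Set MeasureTheory intervalIntegral

lemma hlKernel_eq (ξ : ℝ) :
    hlKernel ξ = if ξ ≤ -1 then 0 else if ξ ≤ 1 then (ξ + 1) ^ 2 / 4 else ξ := by
  unfold hlKernel
  by_cases h1 : ξ ≤ -1
  · simp [h1]
  · rw [if_neg h1, if_neg h1]
    by_cases h2 : ξ < 1
    · rw [if_pos h2, if_pos h2.le]
    · rw [if_neg h2]
      by_cases h3 : ξ ≤ 1
      · have : ξ = 1 := le_antisymm h3 (not_lt.mp h2)
        subst this
        norm_num
      · rw [if_neg h3]

lemma hlKernel_continuous : Continuous hlKernel := by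
  have h : hlKernel = fun ξ => if ξ ≤ -1 then 0 else if ξ ≤ 1 then (ξ + 1) ^ 2 / 4 else ξ :=
    funext hlKernel_eq
  rw [h]
  apply Continuous.if_le
  · exact continuous_const
  · apply Continuous.if_le (by fun_prop) continuous_id continuous_id continuous_const
    intro x hx
    subst hx
    norm_num
  · exact continuous_id
  · exact continuous_const
  · intro x hx
    subst hx
    norm_num

lemma support_line {ρ : ℝ} (h0 : 0 ≤ ρ) (h1 : ρ ≤ 1) (ξ : ℝ) :
    ρ * ξ + ρ * (1 - ρ) ≤ hlKernel ξ := by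
  unfold hlKernel
  split_ifs with ha hb
  · nlinarith [mul_nonpos_of_nonneg_of_nonpos h0 (by linarith : ξ + 1 ≤ 0)]
  · nlinarith [sq_nonneg ((ξ + 1) / 2 - ρ)]
  · push_neg at ha hb
    nlinarith [mul_nonneg (by linarith : (0:ℝ) ≤ 1 - ρ) (by linarith : (0:ℝ) ≤ ξ - ρ)]

lemma piece_bound {w : ℝ → ℝ} {a b ρ c : ℝ} (hab : a ≤ b)
    (hC1 : ContDiffOn ℝ 1 w (Set.Icc a b))
    (hline : ∀ ξ, ρ * ξ + c ≤ hlKernel ξ) :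
    IntervalIntegrable (fun s => hlKernel (deriv w s)) volume a b ∧
    ρ * (w b - w a) + c * (b - a) ≤ ∫ s in a..b, hlKernel (deriv w s) := by
  rcases eq_or_lt_of_le hab with rfl | hlt
  · simp
  set g := derivWithin w (Set.Icc a b) with hg
  have hgcont : ContinuousOn g (Set.Icc a b) :=
    hC1.continuousOn_derivWithin (uniqueDiffOn_Icc hlt) le_rfl
  have hae : ∀ x ∈ Set.Ioo a b, g x = deriv w x := by
    intro x hx
    exact derivWithin_of_mem_nhds (Icc_mem_nhds hx.1 hx.2)
  have hdiff : ∀ x ∈ Set.Ioo a b, HasDerivAt w (deriv w x) x := by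
    intro x hx
    have hd : DifferentiableAt ℝ w x :=
      ((hC1.differentiableOn one_ne_zero) x (Ioo_subset_Icc_self hx)).differentiableAt
        (Icc_mem_nhds hx.1 hx.2)
    exact hd.hasDerivAt
  have hg_int : IntervalIntegrable (fun s => hlKernel (g s)) volume a b := by
    apply ContinuousOn.intervalIntegrable
    rw [uIcc_of_le hab]
    exact hlKernel_continuous.comp_continuousOn hgcont
  have hg_int' : IntervalIntegrable g volume a b := by
    apply ContinuousOn.intervalIntegrable
    rw [uIcc_of_le hab]
    exact hgcont
  have hint1 : IntervalIntegrable (fun s => hlKernel (deriv w s)) volume a b := by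
    rw [intervalIntegrable_iff_integrableOn_Ioo_of_le hab]
    refine ((intervalIntegrable_iff_integrableOn_Ioo_of_le hab).mp hg_int).congr_fun
      (fun x hx => congrArg hlKernel (hae x hx)) measurableSet_Ioo
  have hint2 : IntervalIntegrable (deriv w) volume a b := by
    rw [intervalIntegrable_iff_integrableOn_Ioo_of_le hab]
    refine ((intervalIntegrable_iff_integrableOn_Ioo_of_le hab).mp hg_int').congr_fun
      (fun x hx => ?_) measurableSet_Ioo
    exact hae x hx
  have hftc : ∫ s in a..b, deriv w s = w b - w a :=
    integral_eq_sub_of_hasDerivAt_of_le hab hC1.continuousOn hdiff hint2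
  refine ⟨hint1, ?_⟩
  have hint3 : IntervalIntegrable (fun s => ρ * deriv w s + c) volume a b :=
    (hint2.const_mul ρ).add intervalIntegrable_const
  have hmono : ∫ s in a..b, (ρ * deriv w s + c) ≤ ∫ s in a..b, hlKernel (deriv w s) :=
    intervalIntegral.integral_mono_on hab hint3 hint1 (fun x _ => hline (deriv w x))
  have hcomp : ∫ s in a..b, (ρ * deriv w s + c) = ρ * (w b - w a) + c * (b - a) := by
    rw [intervalIntegral.integral_add (hint2.const_mul ρ) intervalIntegrable_const,
      intervalIntegral.integral_const_mul, hftc, intervalIntegral.integral_const]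
    simp [smul_eq_mul]
    ring
  linarith

lemma global_bound {w : ℝ → ℝ} {t₀ ρ c : ℝ} (hw : PiecewiseC1On w 0 t₀)
    (hline : ∀ ξ, ρ * ξ + c ≤ hlKernel ξ) :
    ρ * (w t₀ - w 0) + c * t₀ ≤ ∫ s in (0:ℝ)..t₀, hlKernel (deriv w s) := by
  obtain ⟨hcont, k, s, hmono, hs0, hsk, hC1⟩ := hw
  set S : ℕ → ℝ := fun n => s ⟨min n k, Nat.lt_succ_of_le (min_le_right n k)⟩ with hSdef
  have hS0 : S 0 = 0 := by
    rw [← hs0]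
    exact congrArg s (Fin.ext (by simp))
  have hSk : S k = t₀ := by
    rw [← hsk]
    exact congrArg s (Fin.ext (by simp [Fin.last]))
  have hcast : ∀ (i : ℕ) (hik : i < k),
      S i = s ((⟨i, hik⟩ : Fin k).castSucc) ∧ S (i + 1) = s ((⟨i, hik⟩ : Fin k).succ) := by
    intro i hik
    constructor
    · exact congrArg s (Fin.ext (by simp [Nat.min_eq_left hik.le]))
    · exact congrArg s (Fin.ext (by simp [Nat.min_eq_left hik]))
  have hplemma : ∀ (i : ℕ), i < k →
      IntervalIntegrable (fun s => hlKernel (deriv w s)) volume (S i) (S (i + 1)) ∧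
      ρ * (w (S (i + 1)) - w (S i)) + c * (S (i + 1) - S i)
        ≤ ∫ x in S i..S (i + 1), hlKernel (deriv w x) := by
    intro i hik
    obtain ⟨h1, h2⟩ := hcast i hik
    rw [h1, h2]
    have hle : s ((⟨i, hik⟩ : Fin k).castSucc) ≤ s ((⟨i, hik⟩ : Fin k).succ) :=
      (hmono Fin.castSucc_lt_succ).le
    exact piece_bound hle (hC1 ⟨i, hik⟩) hline
  have hsum := intervalIntegral.sum_integral_adjacent_intervals
    (μ := volume) (f := fun s => hlKernel (deriv w s)) (a := S) (n := k)
    (fun i hik => (hplemma i hik).1)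
  rw [hS0, hSk] at hsum
  have htel : ∑ i ∈ Finset.range k, (ρ * (w (S (i + 1)) - w (S i)) + c * (S (i + 1) - S i))
      = ρ * (w t₀ - w 0) + c * t₀ := by
    have h := Finset.sum_range_sub (fun n => ρ * w (S n) + c * S n) k
    calc ∑ i ∈ Finset.range k, (ρ * (w (S (i + 1)) - w (S i)) + c * (S (i + 1) - S i))
        = ∑ i ∈ Finset.range k,
            ((ρ * w (S (i + 1)) + c * S (i + 1)) - (ρ * w (S i) + c * S i)) := by
          apply Finset.sum_congr rfl; intro i _; ring
      _ = (ρ * w (S k) + c * S k) - (ρ * w (S 0) + c * S 0) := h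
      _ = ρ * (w t₀ - w 0) + c * t₀ := by rw [hS0, hSk]; ring
  calc ρ * (w t₀ - w 0) + c * t₀
      = ∑ i ∈ Finset.range k, (ρ * (w (S (i + 1)) - w (S i)) + c * (S (i + 1) - S i)) :=
        htel.symm
    _ ≤ ∑ i ∈ Finset.range k, ∫ x in S i..S (i + 1), hlKernel (deriv w x) :=
        Finset.sum_le_sum (fun i hik => (hplemma i (Finset.mem_range.mp hik)).2)
    _ = ∫ s in (0:ℝ)..t₀, hlKernel (deriv w s) := hsum

/-- Hopf–Lax value across a stationary shock: with unit speed and initial data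
`f(ξ) = ρ⁻ ξ` for `ξ < 0`, `f(ξ) = ρ⁺ ξ` for `ξ ≥ 0`, where `ρ⁻ + ρ⁺ = 1` and
`ρ⁻ ≥ ρ⁺`, the value at `(t₀, 0)` is `ρ⁻(1−ρ⁻) t₀`. -/
theorem stmt10 (ρm ρp t₀ : ℝ) (h1 : ρm ∈ Set.Ioo (0:ℝ) 1) (h2 : ρp ∈ Set.Ioo (0:ℝ) 1)
    (hsum : ρm + ρp = 1) (hge : ρp ≤ ρm) (ht₀ : 0 < t₀) :
    IsGLB {y : ℝ | ∃ w : ℝ → ℝ, PiecewiseC1On w 0 t₀ ∧ w t₀ = 0 ∧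
        y = (∫ s in (0:ℝ)..t₀, hlKernel (deriv w s)) +
          (if w 0 < 0 then ρm * w 0 else ρp * w 0)}
      (ρm * (1 - ρm) * t₀) := by
  obtain ⟨hm0, hm1⟩ := h1
  obtain ⟨hp0, hp1⟩ := h2
  constructor
  · rintro y ⟨w, hw, hwt, rfl⟩
    by_cases hneg : w 0 < 0
    · have hgl := global_bound hw (support_line hm0.le hm1.le)
      rw [hwt] at hgl
      rw [if_pos hneg]
      nlinarith
    · have hgl := global_bound hw (support_line hp0.le hp1.le)
      rw [hwt] at hgl
      rw [if_neg hneg]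
      have heq : ρp * (1 - ρp) = ρm * (1 - ρm) := by nlinarith
      nlinarith
  · intro b hb
    apply hb
    refine ⟨fun s => (2 * ρm - 1) * (s - t₀), ⟨(by fun_prop : Continuous _).continuousOn,
      1, fun i => if i = 0 then 0 else t₀, ?_, by simp, by simp [Fin.last], ?_⟩,
      by ring, ?_⟩
    · intro i j hij
      fin_cases i <;> fin_cases j <;> simp_all [ht₀]
    · intro i
      exact (by fun_prop : ContDiff ℝ 1 fun s => (2 * ρm - 1) * (s - t₀)).contDiffOn
    · have hd : (fun x => deriv (fun s => (2 * ρm - 1) * (s - t₀)) x)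
          = fun _ : ℝ => 2 * ρm - 1 := by
        funext x
        have : HasDerivAt (fun s => (2 * ρm - 1) * (s - t₀)) ((2 * ρm - 1) * 1) x :=
          ((hasDerivAt_id x).sub_const t₀).const_mul _
        simp only [mul_one] at this
        exact this.deriv
      have hρ : (1:ℝ) / 2 ≤ ρm := by linarith
      have hk : hlKernel (2 * ρm - 1) = ρm ^ 2 := by
        unfold hlKernel
        rw [if_neg (by linarith), if_pos (by linarith)]
        ring
      simp only [hd, hk, intervalIntegral.integral_const, smul_eq_mul]
      by_cases hcase : (2 * ρm - 1) * ((0:ℝ) - t₀) < 0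
      · rw [if_pos hcase]
        ring
      · rw [if_neg hcase]
        push_neg at hcase
        have h12 : ρm = 1 / 2 := by nlinarith
        have hp12 : ρp = 1 / 2 := by linarith
        rw [h12, hp12]
        ring
end

section
/- Let λ ≤ Λ be a speed function, f₁, f₂ be 1-Lipschitz nondecreasing functions, and h₁, h₂ the corresponding Hopf–Lax functions. Then for every (t₀,ξ₀) ∈ [0,T] × ℝ: |h₁(t₀,ξ₀) − h₂(t₀,ξ₀)| ≤ sup{ |f₁(ξ) − f₂(ξ)| : |ξ − ξ₀| ≤ t₀·Λ }. -/
/-- The Hopf–Lax function for a space-time dependent speed `λ` and initial data `f`. -/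
noncomputable def hopfLax (lam : ℝ → ℝ → ℝ) (f : ℝ → ℝ) (t ξ : ℝ) : ℝ :=
  sInf {y : ℝ | ∃ w : ℝ → ℝ, PiecewiseC1On w 0 t ∧ w t = ξ ∧
    y = (∫ s in (0:ℝ)..t, lam s (w s) * hlKernel (deriv w s / lam s (w s))) + f (w 0)}

open Set MeasureTheory intervalIntegral

lemma hlKernel_nonneg (ξ : ℝ) : 0 ≤ hlKernel ξ := by
  unfold hlKernel; split_ifs with h1 h2
  · exact le_refl 0
  · positivity
  · linarith

lemma le_hlKernel (ξ : ℝ) : ξ ≤ hlKernel ξ := by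
  unfold hlKernel; split_ifs with h1 h2
  · linarith
  · nlinarith [sq_nonneg (ξ - 1)]
  · exact le_refl ξ

lemma hlKernel_le (ξ : ℝ) : hlKernel ξ ≤ |ξ| + 1 := by
  unfold hlKernel; split_ifs with h1 h2
  · positivity
  · nlinarith [le_abs_self ξ, neg_abs_le ξ, abs_nonneg ξ]
  · nlinarith [le_abs_self ξ]

lemma hlKernel_of_one_le {ξ : ℝ} (h : 1 ≤ ξ) : hlKernel ξ = ξ := by
  unfold hlKernel; rw [if_neg (by linarith), if_neg (not_lt.2 h)]

lemma hlKernel_of_le_neg_one {ξ : ℝ} (h : ξ ≤ -1) : hlKernel ξ = 0 := if_pos h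

lemma measurable_hlKernel : Measurable hlKernel := by
  unfold hlKernel
  apply Measurable.ite (measurableSet_le measurable_id measurable_const) measurable_const
  apply Measurable.ite (measurableSet_lt measurable_id measurable_const)
  · exact ((measurable_id.add_const 1).pow_const 2).div_const 4
  · exact measurable_id

lemma cost_ge {l : ℝ} (hl : 0 < l) (v : ℝ) : v ≤ l * hlKernel (v / l) := by
  have h := mul_le_mul_of_nonneg_left (le_hlKernel (v / l)) hl.le
  calc v = l * (v / l) := by field_simp
    _ ≤ l * hlKernel (v / l) := h

lemma cost_nonneg {l : ℝ} (hl : 0 < l) (v : ℝ) : 0 ≤ l * hlKernel (v / l) :=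
  mul_nonneg hl.le (hlKernel_nonneg _)

lemma cost_le {l Λ : ℝ} (hl : 0 < l) (hlΛ : l ≤ Λ) (v : ℝ) :
    l * hlKernel (v / l) ≤ Λ + |v| := by
  have h := mul_le_mul_of_nonneg_left (hlKernel_le (v / l)) hl.le
  have h2 : l * (|v / l| + 1) = |v| + l := by
    rw [abs_div, abs_of_pos hl]; field_simp
  nlinarith

/-- Lipschitz consequence of the hypotheses on `f`. -/
lemma lip_of_h {f : ℝ → ℝ}
    (hf : ∀ ξ ξ' : ℝ, ξ ≤ ξ' → 0 ≤ f ξ' - f ξ ∧ f ξ' - f ξ ≤ ξ' - ξ) (x y : ℝ) :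
    |f x - f y| ≤ |x - y| := by
  rcases le_total x y with h | h
  · obtain ⟨h1, h2⟩ := hf x y h
    rw [abs_sub_comm, abs_of_nonneg h1, abs_sub_comm, abs_of_nonneg (by linarith)]
    exact h2
  · obtain ⟨h1, h2⟩ := hf y x h
    rw [abs_of_nonneg h1, abs_of_nonneg (by linarith)]
    exact h2

/-- Chain a reflexive-transitive property along the partition. -/
lemma chainQ {k : ℕ} (s : Fin (k + 1) → ℝ) (Q : ℝ → ℝ → Prop)
    (hrefl : ∀ a, Q a a)
    (htrans : ∀ a b c, Q a b → Q b c → Q a c)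
    (hQ : ∀ i : Fin k, Q (s i.castSucc) (s i.succ)) :
    Q (s 0) (s (Fin.last k)) := by
  have h : ∀ j : Fin (k + 1), Q (s 0) (s j) := by
    intro j
    induction j using Fin.induction with
    | zero => exact hrefl _
    | succ i ih => exact htrans _ _ _ ih (hQ i)
  exact h _

/-- Facts on a single `C¹` piece. -/
lemma piece_facts (lam : ℝ → ℝ → ℝ) (Λ : ℝ) (hmeas : Measurable (Function.uncurry lam))
    (hpos : ∀ t ξ, 0 < lam t ξ) (hbd : ∀ t ξ, lam t ξ ≤ Λ)
    (w : ℝ → ℝ) (c d : ℝ) (hcd : c < d) (hw : ContDiffOn ℝ 1 w (Set.Icc c d)) :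
    IntervalIntegrable (fun s => lam s (w s) * hlKernel (deriv w s / lam s (w s)))
      volume c d ∧
    IntervalIntegrable (deriv w) volume c d ∧
    (∫ s in c..d, deriv w s) = w d - w c := by
  have hu : UniqueDiffOn ℝ (Icc c d) := uniqueDiffOn_Icc hcd
  have hdc : ContinuousOn (derivWithin w (Icc c d)) (Icc c d) :=
    hw.continuousOn_derivWithin hu le_rfl
  obtain ⟨M, hM⟩ := isCompact_Icc.exists_bound_of_continuousOn hdc
  have hder_eq : ∀ x ∈ Ioo c d, deriv w x = derivWithin w (Icc c d) x := fun x hx =>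
    (derivWithin_of_mem_nhds (Icc_mem_nhds hx.1 hx.2)).symm
  have hderM : ∀ x ∈ Ioo c d, |deriv w x| ≤ M := fun x hx => by
    rw [hder_eq x hx, ← Real.norm_eq_abs]
    exact hM x (Ioo_subset_Icc_self hx)
  -- generic integrability helper on [c,d]
  have key : ∀ (F : ℝ → ℝ) (M' : ℝ), AEStronglyMeasurable F (volume.restrict (Ioo c d)) →
      (∀ x ∈ Ioo c d, |F x| ≤ M') → IntervalIntegrable F volume c d := by
    intro F M' hm hb
    rw [intervalIntegrable_iff_integrableOn_Ioc_of_le hcd.le]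
    have hIoo : IntegrableOn F (Ioo c d) volume := by
      refine ⟨hm, HasFiniteIntegral.restrict_of_bounded (C := M') measure_Ioo_lt_top ?_⟩
      refine (ae_restrict_iff' measurableSet_Ioo).2 (Filter.Eventually.of_forall fun x hx => ?_)
      rw [Real.norm_eq_abs]; exact hb x hx
    exact hIoo.congr_set_ae Ioo_ae_eq_Ioc.symm
  have hwm : AEMeasurable w (volume.restrict (Ioo c d)) :=
    (hw.continuousOn.mono Ioo_subset_Icc_self).aemeasurable measurableSet_Ioo
  have hlamm : AEMeasurable (fun s => lam s (w s)) (volume.restrict (Ioo c d)) :=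
    hmeas.comp_aemeasurable (aemeasurable_id.prodMk hwm)
  have hderm : AEMeasurable (deriv w) (volume.restrict (Ioo c d)) :=
    (measurable_deriv w).aemeasurable
  have hFm : AEStronglyMeasurable
      (fun s => lam s (w s) * hlKernel (deriv w s / lam s (w s)))
      (volume.restrict (Ioo c d)) :=
    (hlamm.mul (measurable_hlKernel.comp_aemeasurable (hderm.div hlamm))).aestronglyMeasurable
  have hFint : IntervalIntegrable (fun s => lam s (w s) * hlKernel (deriv w s / lam s (w s)))
      volume c d := by
    refine key _ (Λ + M) hFm fun x hx => ?_
    have h1 := cost_nonneg (hpos x (w x)) (deriv w x)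
    have h2 := cost_le (hpos x (w x)) (hbd x (w x)) (deriv w x)
    have h3 := hderM x hx
    have h4 := abs_nonneg (deriv w x)
    rw [abs_of_nonneg h1]
    linarith
  have hdint : IntervalIntegrable (deriv w) volume c d :=
    key _ M hderm.aestronglyMeasurable hderM
  refine ⟨hFint, hdint, ?_⟩
  refine integral_eq_sub_of_hasDeriv_right_of_le hcd.le hw.continuousOn (fun x hx => ?_) hdint
  exact (((hw.differentiableOn one_ne_zero).differentiableAt
    (Icc_mem_nhds hx.1 hx.2)).hasDerivAt).hasDerivWithinAt

/-- Facts about an arbitrary admissible path. -/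
lemma candidate_facts (lam : ℝ → ℝ → ℝ) (Λ : ℝ) (hmeas : Measurable (Function.uncurry lam))
    (hpos : ∀ t ξ, 0 < lam t ξ) (hbd : ∀ t ξ, lam t ξ ≤ Λ)
    (t₀ : ℝ) (ht₀ : 0 ≤ t₀) (w : ℝ → ℝ) (hw : PiecewiseC1On w 0 t₀) :
    IntervalIntegrable (fun s => lam s (w s) * hlKernel (deriv w s / lam s (w s)))
      volume 0 t₀ ∧
    w t₀ - w 0 ≤ ∫ s in (0:ℝ)..t₀, lam s (w s) * hlKernel (deriv w s / lam s (w s)) := by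
  obtain ⟨hc, k, σ, hσ, hσ0, hσl, hσp⟩ := hw
  set F := fun s => lam s (w s) * hlKernel (deriv w s / lam s (w s)) with hF
  have main : (IntervalIntegrable F volume (σ 0) (σ (Fin.last k)) ∧
      IntervalIntegrable (deriv w) volume (σ 0) (σ (Fin.last k)) ∧
      (∫ s in (σ 0)..(σ (Fin.last k)), deriv w s) = w (σ (Fin.last k)) - w (σ 0)) := by
    refine chainQ σ (fun a b => IntervalIntegrable F volume a b ∧
      IntervalIntegrable (deriv w) volume a b ∧
      (∫ s in a..b, deriv w s) = w b - w a) ?_ ?_ ?_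
    · intro a
      exact ⟨IntervalIntegrable.refl, IntervalIntegrable.refl,
        by rw [intervalIntegral.integral_same]; ring⟩
    · rintro a b c ⟨h1, h2, h3⟩ ⟨h4, h5, h6⟩
      exact ⟨h1.trans h4, h2.trans h5,
        by rw [← intervalIntegral.integral_add_adjacent_intervals h2 h5, h3, h6]; ring⟩
    · intro i
      exact piece_facts lam Λ hmeas hpos hbd w _ _ (hσ (Fin.castSucc_lt_succ (i := i))) (hσp i)
  rw [hσ0, hσl] at main
  obtain ⟨h1, h2, h3⟩ := main
  refine ⟨h1, ?_⟩
  rw [← h3]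
  exact integral_mono_on ht₀ h2 h1 fun x _ => cost_ge (hpos x (w x)) (deriv w x)

lemma affine_piecewise (c v a b : ℝ) (hab : a ≤ b) :
    PiecewiseC1On (fun s => c + v * s) a b := by
  have hcd : ContDiff ℝ 1 (fun s : ℝ => c + v * s) :=
    contDiff_const.add (contDiff_const.mul contDiff_id)
  refine ⟨hcd.continuous.continuousOn, ?_⟩
  rcases eq_or_lt_of_le hab with h | h
  · refine ⟨0, fun _ => a, by
      intro i j hij
      have hi : i = 0 := Fin.fin_one_eq_zero i
      have hj : j = 0 := Fin.fin_one_eq_zero j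
      rw [hi, hj] at hij
      exact absurd hij (lt_irrefl _),
      rfl, h ▸ rfl, fun i => i.elim0⟩
  · refine ⟨1, ![a, b], ?_, rfl, rfl, ?_⟩
    · rw [Fin.strictMono_iff_lt_succ]
      intro i
      fin_cases i
      simpa using h
    · intro i
      fin_cases i
      simpa using hcd.contDiffOn

lemma deriv_affine (c v : ℝ) : deriv (fun s : ℝ => c + v * s) = fun _ => v := by
  funext s
  have h : HasDerivAt (fun s : ℝ => c + v * s) v s := by
    simpa using ((hasDerivAt_id s).const_mul v).const_add c
  exact h.deriv

/-- One-sided comparison. -/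
lemma hopfLax_le_aux (Λ : ℝ) (hΛ : 0 < Λ) (lam : ℝ → ℝ → ℝ)
    (hmeas : Measurable (Function.uncurry lam))
    (hpos : ∀ t ξ, 0 < lam t ξ) (hbd : ∀ t ξ, lam t ξ ≤ Λ)
    (f₁ f₂ : ℝ → ℝ)
    (hf₁ : ∀ ξ ξ' : ℝ, ξ ≤ ξ' → 0 ≤ f₁ ξ' - f₁ ξ ∧ f₁ ξ' - f₁ ξ ≤ ξ' - ξ)
    (hf₂ : ∀ ξ ξ' : ℝ, ξ ≤ ξ' → 0 ≤ f₂ ξ' - f₂ ξ ∧ f₂ ξ' - f₂ ξ ≤ ξ' - ξ)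
    (t₀ : ℝ) (ht₀ : 0 ≤ t₀) (ξ₀ C : ℝ)
    (hC : ∀ ξ, |ξ - ξ₀| ≤ t₀ * Λ → f₁ ξ - f₂ ξ ≤ C) :
    hopfLax lam f₁ t₀ ξ₀ ≤ hopfLax lam f₂ t₀ ξ₀ + C := by
  set S₁ := {y : ℝ | ∃ w : ℝ → ℝ, PiecewiseC1On w 0 t₀ ∧ w t₀ = ξ₀ ∧
    y = (∫ s in (0:ℝ)..t₀, lam s (w s) * hlKernel (deriv w s / lam s (w s))) + f₁ (w 0)}
    with hS₁
  set S₂ := {y : ℝ | ∃ w : ℝ → ℝ, PiecewiseC1On w 0 t₀ ∧ w t₀ = ξ₀ ∧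
    y = (∫ s in (0:ℝ)..t₀, lam s (w s) * hlKernel (deriv w s / lam s (w s))) + f₂ (w 0)}
    with hS₂
  have hb₁ : BddBelow S₁ := by
    refine ⟨f₁ ξ₀, ?_⟩
    rintro y ⟨w, hw, hwt, rfl⟩
    obtain ⟨hFint, hAge⟩ := candidate_facts lam Λ hmeas hpos hbd t₀ ht₀ w hw
    rw [hwt] at hAge
    have hA0 : 0 ≤ ∫ s in (0:ℝ)..t₀, lam s (w s) * hlKernel (deriv w s / lam s (w s)) :=
      intervalIntegral.integral_nonneg ht₀ fun u _ => cost_nonneg (hpos u (w u)) (deriv w u)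
    rcases le_total (w 0) ξ₀ with h | h
    · have := (hf₁ (w 0) ξ₀ h).2
      linarith
    · have := (hf₁ ξ₀ (w 0) h).1
      linarith
  have hS₂ne : S₂.Nonempty := by
    refine ⟨_, fun s => ξ₀ + 0 * s, affine_piecewise ξ₀ 0 0 t₀ ht₀, by ring, rfl⟩
  show sInf S₁ ≤ sInf S₂ + C
  refine sub_le_iff_le_add.mp (le_csInf hS₂ne ?_)
  rintro y ⟨w, hw, hwt, rfl⟩
  rw [sub_le_iff_le_add]
  set A := ∫ s in (0:ℝ)..t₀, lam s (w s) * hlKernel (deriv w s / lam s (w s)) with hA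
  obtain ⟨hFint, hAge⟩ := candidate_facts lam Λ hmeas hpos hbd t₀ ht₀ w hw
  rw [hwt] at hAge
  have hA0 : 0 ≤ A :=
    intervalIntegral.integral_nonneg ht₀ fun u _ => cost_nonneg (hpos u (w u)) (deriv w u)
  have htΛ : 0 ≤ t₀ * Λ := mul_nonneg ht₀ hΛ.le
  by_cases hcone : |w 0 - ξ₀| ≤ t₀ * Λ
  · have hmem : A + f₁ (w 0) ∈ S₁ := ⟨w, hw, hwt, rfl⟩
    have h1 := hC (w 0) hcone
    calc sInf S₁ ≤ A + f₁ (w 0) := csInf_le hb₁ hmem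
      _ ≤ A + f₂ (w 0) + C := by linarith
  · push_neg at hcone
    rcases lt_abs.mp hcone with h | h
    · -- w 0 > ξ₀ + t₀ Λ : use the right light-cone line, slope -Λ, zero cost
      set ℓ := fun s : ℝ => (ξ₀ + Λ * t₀) + (-Λ) * s with hℓ
      have hℓpc : PiecewiseC1On ℓ 0 t₀ := affine_piecewise _ _ 0 t₀ ht₀
      have hℓt : ℓ t₀ = ξ₀ := by show (ξ₀ + Λ * t₀) + (-Λ) * t₀ = ξ₀; ring
      have hmem : (∫ s in (0:ℝ)..t₀, lam s (ℓ s) * hlKernel (deriv ℓ s / lam s (ℓ s)))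
          + f₁ (ℓ 0) ∈ S₁ := ⟨ℓ, hℓpc, hℓt, rfl⟩
      have hint : (∫ s in (0:ℝ)..t₀, lam s (ℓ s) * hlKernel (deriv ℓ s / lam s (ℓ s))) = 0 := by
        have hval : ∀ s : ℝ, lam s (ℓ s) * hlKernel (deriv ℓ s / lam s (ℓ s)) = 0 := by
          intro s
          have hd : deriv ℓ s = -Λ := by rw [hℓ, deriv_affine]
          have hle : -Λ / lam s (ℓ s) ≤ -1 := by
            rw [div_le_iff₀ (hpos s (ℓ s))]
            nlinarith [hbd s (ℓ s), hpos s (ℓ s)]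
          rw [hd, hlKernel_of_le_neg_one hle, mul_zero]
        simp only [hval]
        simp
      have hℓ0 : ℓ 0 = ξ₀ + Λ * t₀ := by simp [hℓ]
      have hℓ0cone : |ℓ 0 - ξ₀| ≤ t₀ * Λ := by
        rw [hℓ0]
        rw [abs_of_nonneg (by nlinarith)]
        nlinarith
      have hCb := hC (ℓ 0) hℓ0cone
      have hmono : f₂ (ℓ 0) ≤ f₂ (w 0) := by
        have hle : ℓ 0 ≤ w 0 := by rw [hℓ0]; nlinarith
        have := (hf₂ (ℓ 0) (w 0) hle).1
        linarith
      calc sInf S₁ ≤ _ := csInf_le hb₁ hmem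
        _ = 0 + f₁ (ℓ 0) := by rw [hint]
        _ ≤ A + f₂ (w 0) + C := by linarith
    · -- w 0 < ξ₀ - t₀ Λ : use the left light-cone line, slope Λ, cost Λ t₀
      set ℓ := fun s : ℝ => (ξ₀ - Λ * t₀) + Λ * s with hℓ
      have hℓpc : PiecewiseC1On ℓ 0 t₀ := affine_piecewise _ _ 0 t₀ ht₀
      have hℓt : ℓ t₀ = ξ₀ := by show (ξ₀ - Λ * t₀) + Λ * t₀ = ξ₀; ring
      have hmem : (∫ s in (0:ℝ)..t₀, lam s (ℓ s) * hlKernel (deriv ℓ s / lam s (ℓ s)))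
          + f₁ (ℓ 0) ∈ S₁ := ⟨ℓ, hℓpc, hℓt, rfl⟩
      have hint : (∫ s in (0:ℝ)..t₀, lam s (ℓ s) * hlKernel (deriv ℓ s / lam s (ℓ s)))
          = Λ * t₀ := by
        have hval : ∀ s : ℝ, lam s (ℓ s) * hlKernel (deriv ℓ s / lam s (ℓ s)) = Λ := by
          intro s
          have hd : deriv ℓ s = Λ := by rw [hℓ, deriv_affine]
          have hne : lam s (ℓ s) ≠ 0 := (hpos s (ℓ s)).ne'
          rw [hd, hlKernel_of_one_le ((one_le_div (hpos s (ℓ s))).2 (hbd s (ℓ s)))]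
          field_simp
        simp only [hval]
        rw [intervalIntegral.integral_const]
        simp [smul_eq_mul]
        ring
      have hℓ0 : ℓ 0 = ξ₀ - Λ * t₀ := by simp [hℓ]
      have hℓ0cone : |ℓ 0 - ξ₀| ≤ t₀ * Λ := by
        rw [hℓ0]
        rw [abs_of_nonpos (by nlinarith)]
        nlinarith
      have hCb := hC (ℓ 0) hℓ0cone
      have hlip : f₂ (ℓ 0) - f₂ (w 0) ≤ ℓ 0 - w 0 := by
        have hle : w 0 ≤ ℓ 0 := by rw [hℓ0]; nlinarith
        exact (hf₂ (w 0) (ℓ 0) hle).2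
      calc sInf S₁ ≤ _ := csInf_le hb₁ hmem
        _ = Λ * t₀ + f₁ (ℓ 0) := by rw [hint]
        _ ≤ A + f₂ (w 0) + C := by
            rw [hℓ0] at hCb hlip ⊢
            linarith
/-- Finite propagation speed: the Hopf–Lax functions for two initial conditions differ
at `(t₀,ξ₀)` by at most the sup of `|f₁ − f₂|` over the backward light cone base. -/
theorem stmt13 (T Λ : ℝ) (hT : 0 < T) (hΛ : 0 < Λ) (lam : ℝ → ℝ → ℝ)
    (hmeas : Measurable (Function.uncurry lam))
    (hpos : ∀ t ξ, 0 < lam t ξ) (hbd : ∀ t ξ, lam t ξ ≤ Λ)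
    (f₁ f₂ : ℝ → ℝ)
    (hf₁ : ∀ ξ ξ' : ℝ, ξ ≤ ξ' → 0 ≤ f₁ ξ' - f₁ ξ ∧ f₁ ξ' - f₁ ξ ≤ ξ' - ξ)
    (hf₂ : ∀ ξ ξ' : ℝ, ξ ≤ ξ' → 0 ≤ f₂ ξ' - f₂ ξ ∧ f₂ ξ' - f₂ ξ ≤ ξ' - ξ) :
    ∀ t₀ ∈ Set.Icc (0:ℝ) T, ∀ ξ₀ : ℝ,
      |hopfLax lam f₁ t₀ ξ₀ - hopfLax lam f₂ t₀ ξ₀| ≤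
        sSup ((fun ξ => |f₁ ξ - f₂ ξ|) '' {ξ : ℝ | |ξ - ξ₀| ≤ t₀ * Λ}) := by
  intro t₀ ht₀ ξ₀
  set C := sSup ((fun ξ => |f₁ ξ - f₂ ξ|) '' {ξ : ℝ | |ξ - ξ₀| ≤ t₀ * Λ}) with hCdef
  have htΛ : 0 ≤ t₀ * Λ := mul_nonneg ht₀.1 hΛ.le
  have hbddA : BddAbove ((fun ξ => |f₁ ξ - f₂ ξ|) '' {ξ : ℝ | |ξ - ξ₀| ≤ t₀ * Λ}) := by
    refine ⟨|f₁ ξ₀ - f₂ ξ₀| + 2 * (t₀ * Λ), ?_⟩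
    rintro y ⟨ξ, hξ, rfl⟩
    simp only [Set.mem_setOf_eq] at hξ
    have h1 : |f₁ ξ - f₂ ξ| ≤ |f₁ ξ - f₁ ξ₀| + |f₁ ξ₀ - f₂ ξ₀| + |f₂ ξ₀ - f₂ ξ| := by
      calc |f₁ ξ - f₂ ξ| ≤ |f₁ ξ - f₂ ξ₀| + |f₂ ξ₀ - f₂ ξ| := abs_sub_le _ _ _
        _ ≤ |f₁ ξ - f₁ ξ₀| + |f₁ ξ₀ - f₂ ξ₀| + |f₂ ξ₀ - f₂ ξ| := by
            have := abs_sub_le (f₁ ξ) (f₁ ξ₀) (f₂ ξ₀)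
            linarith
    have h2 := lip_of_h hf₁ ξ ξ₀
    have h3 := lip_of_h hf₂ ξ₀ ξ
    have h4 : |ξ₀ - ξ| ≤ t₀ * Λ := by rw [abs_sub_comm]; exact hξ
    linarith
  have hCge : ∀ ξ, |ξ - ξ₀| ≤ t₀ * Λ → |f₁ ξ - f₂ ξ| ≤ C :=
    fun ξ h => le_csSup hbddA ⟨ξ, h, rfl⟩
  have hC₁ : ∀ ξ, |ξ - ξ₀| ≤ t₀ * Λ → f₁ ξ - f₂ ξ ≤ C :=
    fun ξ h => le_trans (le_abs_self _) (hCge ξ h)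
  have hC₂ : ∀ ξ, |ξ - ξ₀| ≤ t₀ * Λ → f₂ ξ - f₁ ξ ≤ C := by
    intro ξ h
    have := hCge ξ h
    have h2 : f₂ ξ - f₁ ξ ≤ |f₁ ξ - f₂ ξ| := by
      rw [abs_sub_comm]; exact le_abs_self _
    linarith
  have key₁ := hopfLax_le_aux Λ hΛ lam hmeas hpos hbd f₁ f₂ hf₁ hf₂ t₀ ht₀.1 ξ₀ C hC₁
  have key₂ := hopfLax_le_aux Λ hΛ lam hmeas hpos hbd f₂ f₁ hf₂ hf₁ t₀ ht₀.1 ξ₀ C hC₂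
  rw [abs_sub_le_iff]
  constructor <;> linarith
end
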